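/- Let H be a real Hilbert space with inner product ⟨·,·⟩ and g a second continuous inner product on H whose induced norm is strictly weaker than the Hilbert norm (i.e., g(x,x) ≤ C‖x‖² for some C, but the two norms are not equivalent). Then there exists a continuous linear functional φ ∈ H* that is not representable by g: there is no v ∈ H with φ(w) = g(v, w) for all w ∈ H. Hence the musical map ♭_g : H → H*, v ↦ g(v,·) is not surjective. -/

import Mathlib

/-- Cauchy–Schwarz for an abstract positive symmetric bilinear form. -/
lemma statement16_cs {H : Type*} [AddCommGroup H] [Module ℝ H]
    (g : H → H → ℝ)
    (hg_symm : ∀ x y, g x y = g y x)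
    (hg_add : ∀ x y z, g (x + y) z = g x z + g y z)
    (hg_smul : ∀ (a : ℝ) (x y), g (a • x) y = a * g x y)
    (hg_pos : ∀ x, 0 ≤ g x x) (x y : H) :
    g x y ^ 2 ≤ g x x * g y y := by
  have hadd' : ∀ x y z : H, g x (y + z) = g x y + g x z := fun x y z => by
    rw [hg_symm, hg_add, hg_symm y, hg_symm z]
  have hsmul' : ∀ (a : ℝ) (x y : H), g x (a • y) = a * g x y := fun a x y => by
    rw [hg_symm, hg_smul, hg_symm]
  have h : ∀ t : ℝ, 0 ≤ g x x * (t * t) + (2 * g x y) * t + g y y := by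
    intro t
    have := hg_pos (t • x + y)
    rw [hg_add, hadd', hadd', hg_smul, hg_smul, hsmul', hsmul', hg_symm y x] at this
    ring_nf at this ⊢
    linarith
  have := discrim_le_zero h
  rw [discrim] at this
  nlinarith

/-- If a real Hilbert space carries a second continuous inner product
`g` whose induced norm is strictly weaker than (bounded by, but not equivalent to)
the Hilbert norm, then some continuous linear functional is not representable by
`g`; i.e. the musical map `v ↦ g v ·` is not surjective. -/
theorem statement16
    {H : Type*} [NormedAddCommGroup H] [InnerProductSpace ℝ H] [CompleteSpace H]
    (g : H → H → ℝ)
    (hg_symm : ∀ x y, g x y = g y x)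
    (hg_add : ∀ x y z, g (x + y) z = g x z + g y z)
    (hg_smul : ∀ (a : ℝ) (x y), g (a • x) y = a * g x y)
    (hg_pos : ∀ x, 0 ≤ g x x)
    (hg_def : ∀ x, g x x = 0 → x = 0)
    -- continuity: `g` is bounded by the Hilbert norm
    (C : ℝ) (hg_bdd : ∀ x y, g x y ≤ C * ‖x‖ * ‖y‖)
    -- the norms are not equivalent
    (hg_weak : ∀ ε : ℝ, 0 < ε → ∃ x : H, ‖x‖ = 1 ∧ g x x < ε) :
    ∃ φ : H →L[ℝ] ℝ, ¬∃ v : H, ∀ w : H, φ w = g v w := by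
  by_contra hcon
  push_neg at hcon
  -- C is nonnegative
  have hC : 0 ≤ C := by
    obtain ⟨x, hx1, _⟩ := hg_weak 1 one_pos
    have := (hg_pos x).trans (hg_bdd x x)
    rwa [hx1, mul_one, mul_one] at this
  have habs : ∀ x y : H, |g x y| ≤ C * ‖x‖ * ‖y‖ := by
    intro x y
    rcases abs_cases (g x y) with ⟨h, _⟩ | ⟨h, _⟩
    · rw [h]; exact hg_bdd x y
    · rw [h]
      have : g (-x) y = -g x y := by
        have := hg_smul (-1) x y; simpa using this
      calc -g x y = g (-x) y := this.symm
        _ ≤ C * ‖-x‖ * ‖y‖ := hg_bdd _ _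
        _ = C * ‖x‖ * ‖y‖ := by rw [norm_neg]
  -- the bilinear map as a continuous linear map
  let B : H →ₗ[ℝ] H →ₗ[ℝ] ℝ := LinearMap.mk₂ ℝ g hg_add hg_smul
    (fun x y z => by rw [hg_symm, hg_add, hg_symm y, hg_symm z])
    (fun a x y => by simp only [smul_eq_mul]; rw [hg_symm, hg_smul, hg_symm])
  let F : H →L[ℝ] H →L[ℝ] ℝ := LinearMap.mkContinuous₂ B C (fun x y => by
    simpa [B] using habs x y)
  have hF : ∀ v w, F v w = g v w := fun v w => rfl
  have hker : F.ker = ⊥ := by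
    rw [LinearMap.ker_eq_bot']
    intro v hv
    apply hg_def
    have : F v v = 0 := by rw [show F v = 0 from hv]; rfl
    rwa [hF] at this
  have hrange : F.range = ⊤ := by
    rw [LinearMap.range_eq_top]
    intro φ
    obtain ⟨v, hv⟩ := hcon φ
    exact ⟨v, by ext w; show F v w = _; rw [hF]; exact (hv w).symm⟩
  let e := ContinuousLinearEquiv.ofBijective F hker hrange
  set K := ‖(e.symm : (H →L[ℝ] ℝ) →L[ℝ] H)‖ with hK
  have hKpos : 0 ≤ K := norm_nonneg _
  -- bound ‖F v‖ for any v
  have hFv : ∀ v : H, ‖F v‖ ≤ Real.sqrt C * Real.sqrt (g v v) := by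
    intro v
    apply ContinuousLinearMap.opNorm_le_bound _
      (mul_nonneg (Real.sqrt_nonneg _) (Real.sqrt_nonneg _))
    intro w
    rw [hF]
    have cs := statement16_cs g hg_symm hg_add hg_smul hg_pos v w
    have h1 : |g v w| ≤ Real.sqrt (g v v) * Real.sqrt (g w w) := by
      rw [← Real.sqrt_mul (hg_pos v)]
      rw [← Real.sqrt_sq_eq_abs]
      exact Real.sqrt_le_sqrt cs
    have h2 : Real.sqrt (g w w) ≤ Real.sqrt C * ‖w‖ := by
      have : g w w ≤ C * ‖w‖ ^ 2 := by
        have := hg_bdd w w; nlinarith [this]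
      calc Real.sqrt (g w w) ≤ Real.sqrt (C * ‖w‖ ^ 2) := Real.sqrt_le_sqrt this
        _ = Real.sqrt C * ‖w‖ := by
          rw [Real.sqrt_mul hC, Real.sqrt_sq (norm_nonneg w)]
    calc ‖g v w‖ = |g v w| := rfl
      _ ≤ Real.sqrt (g v v) * Real.sqrt (g w w) := h1
      _ ≤ Real.sqrt (g v v) * (Real.sqrt C * ‖w‖) := by
          exact mul_le_mul_of_nonneg_left h2 (Real.sqrt_nonneg _)
      _ = Real.sqrt C * Real.sqrt (g v v) * ‖w‖ := by ring
  -- now derive a contradiction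
  set D := K * Real.sqrt C with hD
  have hDpos : 0 ≤ D := mul_nonneg hKpos (Real.sqrt_nonneg _)
  have hε : (0:ℝ) < 1 / (D + 1) ^ 2 := by positivity
  obtain ⟨x, hx1, hxg⟩ := hg_weak _ hε
  have hbound : ‖x‖ ≤ K * ‖F x‖ := by
    have : x = e.symm (F x) := (ContinuousLinearEquiv.ofBijective_symm_apply_apply F hker hrange x).symm
    calc ‖x‖ = ‖e.symm (F x)‖ := by rw [← this]
      _ ≤ K * ‖F x‖ := (e.symm : (H →L[ℝ] ℝ) →L[ℝ] H).le_opNorm _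
  have h3 : ‖x‖ ≤ D * Real.sqrt (g x x) := by
    calc ‖x‖ ≤ K * ‖F x‖ := hbound
      _ ≤ K * (Real.sqrt C * Real.sqrt (g x x)) :=
          mul_le_mul_of_nonneg_left (hFv x) hKpos
      _ = D * Real.sqrt (g x x) := by ring
  have h4 : Real.sqrt (g x x) < 1 / (D + 1) := by
    have : Real.sqrt (g x x) < Real.sqrt (1 / (D + 1) ^ 2) :=
      (Real.sqrt_lt_sqrt (hg_pos x) hxg)
    have heq : Real.sqrt (1 / (D + 1) ^ 2) = 1 / (D + 1) := by
      rw [show (1:ℝ) / (D + 1) ^ 2 = (1 / (D + 1)) ^ 2 by rw [div_pow, one_pow],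
        Real.sqrt_sq (by positivity)]
    rwa [heq] at this
  rw [hx1] at h3
  have : D * Real.sqrt (g x x) ≤ D * (1 / (D + 1)) :=
    mul_le_mul_of_nonneg_left (le_of_lt h4) hDpos
  have hfrac : D * (1 / (D + 1)) < 1 := by
    rw [mul_one_div, div_lt_one (by linarith)]; linarith
  linarith
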